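/- Let 𝓕 be a finite nonempty family of nonempty subsets of [r], and let c be the number of equivalence classes of the equivalence relation on [r] generated by declaring i ∼ j whenever i, j ∈ F for some F ∈ 𝓕. Then the dimension of the affine hull of the polytope Δ_𝓕 equals r − c. -/

import Mathlib

open Finset Pointwise

/-- The 0/1 indicator vector (in `ℝ^n`) of a finite set of coordinates. -/
def indVec {n : ℕ} (S : Finset (Fin n)) : Fin n → ℝ := fun i => if i ∈ S then 1 else 0

/-- Independence with respect to a family `𝔅` of bases: being contained in a basis. -/
def FamIndep {n : ℕ} (𝔅 : Finset (Finset (Fin n))) (I : Finset (Fin n)) : Prop :=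
  ∃ B ∈ 𝔅, I ⊆ B

/-- Circuits of the family `𝔅`: minimal dependent sets. -/
def FamCircuit {n : ℕ} (𝔅 : Finset (Finset (Fin n))) (C : Finset (Fin n)) : Prop :=
  ¬ FamIndep 𝔅 C ∧ ∀ D ⊂ C, FamIndep 𝔅 D

open scoped Classical in
/-- The rank of a set: maximal cardinality of an independent subset. -/
noncomputable def famRk {n : ℕ} (𝔅 : Finset (Finset (Fin n))) (F : Finset (Fin n)) : ℕ :=
  (F.powerset.filter (fun I => FamIndep 𝔅 I)).sup Finset.card

open scoped Classical in
/-- The bases of the restriction to `F`: the maximal independent subsets of `F`. -/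
noncomputable def famRestrictBases {n : ℕ} (𝔅 : Finset (Finset (Fin n)))
    (F : Finset (Fin n)) : Finset (Finset (Fin n)) :=
  F.powerset.filter fun B =>
    FamIndep 𝔅 B ∧ ∀ B' ⊆ F, FamIndep 𝔅 B' → B ⊆ B' → B = B'

open scoped Classical in
/-- The bases of the contraction by `F`: the sets `B \ F` where `B` is a basis meeting `F`
in a set of full rank `rk F`. -/
noncomputable def famContractBases {n : ℕ} (𝔅 : Finset (Finset (Fin n)))
    (F : Finset (Fin n)) : Finset (Finset (Fin n)) :=
  (𝔅.filter fun B => (B ∩ F).card = famRk 𝔅 F).image (· \ F)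

/-- `i` and `j` are related if equal or contained in a common circuit. -/
def FamConnRel {n : ℕ} (𝔅 : Finset (Finset (Fin n))) (i j : Fin n) : Prop :=
  i = j ∨ ∃ C, FamCircuit 𝔅 C ∧ i ∈ C ∧ j ∈ C

/-- Number of connected components: number of classes of the equivalence relation
generated by `FamConnRel`. -/
noncomputable def famNumComponents {n : ℕ} (𝔅 : Finset (Finset (Fin n))) : ℕ :=
  Nat.card (Quot (FamConnRel 𝔅))

/-- Connectedness of the matroid presented by bases `𝔅` on the ground set `E`:
any two distinct elements of `E` lie in a common circuit (within `E`). -/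
def FamConnectedOn {n : ℕ} (𝔅 : Finset (Finset (Fin n))) (E : Finset (Fin n)) : Prop :=
  ∀ i ∈ E, ∀ j ∈ E, i ≠ j → ∃ C, C ⊆ E ∧ FamCircuit 𝔅 C ∧ i ∈ C ∧ j ∈ C

/-- A matroid of rank `r` on the ground set `Fin n`, given by its collection of bases:
`r`-element sets satisfying the basis exchange axiom. -/
structure FinMatroid (n r : ℕ) where
  bases : Finset (Finset (Fin n))
  bases_nonempty : bases.Nonempty
  card_bases : ∀ B ∈ bases, B.card = r
  exchange : ∀ B₁ ∈ bases, ∀ B₂ ∈ bases, ∀ i ∈ B₁ \ B₂,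
      ∃ j ∈ B₂ \ B₁, insert j (B₁.erase i) ∈ bases

namespace FinMatroid

variable {n r : ℕ}

def Indep (M : FinMatroid n r) (I : Finset (Fin n)) : Prop := FamIndep M.bases I

def IsCircuit (M : FinMatroid n r) (C : Finset (Fin n)) : Prop := FamCircuit M.bases C

noncomputable def rk (M : FinMatroid n r) (F : Finset (Fin n)) : ℕ := famRk M.bases F

/-- A flat: no circuit leaves exactly one element outside `F`. -/
def IsFlat (M : FinMatroid n r) (F : Finset (Fin n)) : Prop :=
  ∀ C, M.IsCircuit C → (C \ F).card ≠ 1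

open scoped Classical in
/-- Closure of a set: the intersection of all flats containing it (the smallest flat
containing it). -/
noncomputable def closure (M : FinMatroid n r) (S : Finset (Fin n)) : Finset (Fin n) :=
  Finset.univ.filter fun i => ∀ F, M.IsFlat F → S ⊆ F → i ∈ F

/-- No single element is dependent. -/
def Loopless (M : FinMatroid n r) : Prop := ∀ i : Fin n, M.Indep {i}

noncomputable def numComponents (M : FinMatroid n r) : ℕ := famNumComponents M.bases

/-- Any two distinct elements lie in a common circuit. -/
def Connected (M : FinMatroid n r) : Prop :=
  ∀ i j : Fin n, i ≠ j → ∃ C, M.IsCircuit C ∧ i ∈ C ∧ j ∈ C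

/-- `B` is a `w`-maximal basis of `M`. -/
def IsMaxBasis (M : FinMatroid n r) (w : Fin n → ℝ) (B : Finset (Fin n)) : Prop :=
  B ∈ M.bases ∧ ∀ B' ∈ M.bases, ∑ i ∈ B', w i ≤ ∑ i ∈ B, w i

open scoped Classical in
/-- The bases of the matroid `M_w`: the `w`-maximal bases of `M`. -/
noncomputable def maxBases (M : FinMatroid n r) (w : Fin n → ℝ) :
    Finset (Finset (Fin n)) :=
  M.bases.filter fun B => ∀ B' ∈ M.bases, ∑ i ∈ B', w i ≤ ∑ i ∈ B, w i

/-- Membership in the Bergman fan: on every circuit the minimum of `w` is attained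
at least twice. -/
def InBergmanFan (M : FinMatroid n r) (w : Fin n → ℝ) : Prop :=
  ∀ C, M.IsCircuit C → ∃ i ∈ C, ∃ j ∈ C, i ≠ j ∧ w i = w j ∧ ∀ k ∈ C, w i ≤ w k

/-- The matroid polytope: convex hull of the indicator vectors of the bases. -/
noncomputable def polytope (M : FinMatroid n r) : Set (Fin n → ℝ) :=
  convexHull ℝ (indVec '' ↑M.bases)

noncomputable def restrictBases (M : FinMatroid n r) (F : Finset (Fin n)) :
    Finset (Finset (Fin n)) :=
  famRestrictBases M.bases F

noncomputable def contractBases (M : FinMatroid n r) (F : Finset (Fin n)) :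
    Finset (Finset (Fin n)) :=
  famContractBases M.bases F

/-- `𝓖` is a building set in the lattice of flats of `M` (with bottom element `∅` and
join = closure of union): for every nonempty flat `X`, the join map is an order
isomorphism from the product of the lower intervals of the maximal elements of
`𝓖` below `X` onto the lower interval of `X`. -/
def IsFlatBuilding (M : FinMatroid n r) (𝓖 : Set (Finset (Fin n))) : Prop :=
  (∀ F ∈ 𝓖, M.IsFlat F ∧ F ≠ ∅) ∧
  ∀ X, M.IsFlat X → X ≠ ∅ →
    ∃ (k : ℕ) (g : Fin k → Finset (Fin n)),
      Function.Injective g ∧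
      (∀ i, g i ∈ 𝓖 ∧ g i ⊆ X) ∧
      (∀ i, ∀ H ∈ 𝓖, H ⊆ X → g i ⊆ H → g i = H) ∧
      (∀ H ∈ 𝓖, H ⊆ X → ∃ i, H ⊆ g i) ∧
      ∃ e : (∀ i : Fin k, {F : Finset (Fin n) // M.IsFlat F ∧ F ⊆ g i}) ≃o
              {F : Finset (Fin n) // M.IsFlat F ∧ F ⊆ X},
        ∀ y, (e y).1 = M.closure (Finset.univ.sup fun i => (y i).1)

/-- `S` is nested with respect to `𝓖` (in the lattice of flats of `M`): `S ⊆ 𝓖` and for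
every subcollection of at least two pairwise incomparable members, their join (the
closure of their union) is not in `𝓖`. -/
def IsNested (M : FinMatroid n r) (𝓖 : Set (Finset (Fin n)))
    (S : Finset (Finset (Fin n))) : Prop :=
  ↑S ⊆ 𝓖 ∧ ∀ T ⊆ S, 2 ≤ T.card →
    (∀ A ∈ T, ∀ B ∈ T, A ≠ B → ¬ A ⊆ B ∧ ¬ B ⊆ A) →
    M.closure (T.sup id) ∉ 𝓖

end FinMatroid

/-- A building set in the Boolean lattice of subsets of `Fin r`: for every nonempty
`X ⊆ [r]`, the union map is an order isomorphism from the product of the lower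
intervals of the maximal elements of `𝓕` below `X` onto the lower interval of `X`. -/
def BoolBuilding {r : ℕ} (𝓕 : Set (Finset (Fin r))) : Prop :=
  (∀ F ∈ 𝓕, F ≠ ∅) ∧
  ∀ X : Finset (Fin r), X ≠ ∅ →
    ∃ (k : ℕ) (g : Fin k → Finset (Fin r)),
      Function.Injective g ∧
      (∀ i, g i ∈ 𝓕 ∧ g i ⊆ X) ∧
      (∀ i, ∀ H ∈ 𝓕, H ⊆ X → g i ⊆ H → g i = H) ∧
      (∀ H ∈ 𝓕, H ⊆ X → ∃ i, H ⊆ g i) ∧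
      ∃ e : (∀ i : Fin k, {F : Finset (Fin r) // F ⊆ g i}) ≃o
              {F : Finset (Fin r) // F ⊆ X},
        ∀ y, (e y).1 = Finset.univ.sup fun i => (y i).1

/-- `S` is nested with respect to `𝓕` in the Boolean lattice: for every subcollection
of at least two pairwise incomparable members, their union is not in `𝓕`. -/
def BoolNested {r : ℕ} (𝓕 : Set (Finset (Fin r))) (S : Finset (Finset (Fin r))) : Prop :=
  ↑S ⊆ 𝓕 ∧ ∀ T ⊆ S, 2 ≤ T.card →
    (∀ A ∈ T, ∀ B ∈ T, A ≠ B → ¬ A ⊆ B ∧ ¬ B ⊆ A) →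
    T.sup id ∉ 𝓕

/-- The simplex `Δ_F = conv{e_i : i ∈ F}`. -/
noncomputable def faceSimplex {r : ℕ} (F : Finset (Fin r)) : Set (Fin r → ℝ) :=
  convexHull ℝ ((fun i => (Pi.single i 1 : Fin r → ℝ)) '' ↑F)

/-- The Minkowski sum `Δ_𝓕 = Σ_{F ∈ 𝓕} Δ_F`. -/
noncomputable def minkSum {r : ℕ} (𝓕 : Finset (Finset (Fin r))) : Set (Fin r → ℝ) :=
  ∑ F ∈ 𝓕, faceSimplex F

section Aux
variable {r : ℕ}

lemma vectorSpan_add_eq {A B : Set (Fin r → ℝ)} (hA : A.Nonempty) (hB : B.Nonempty) :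
    vectorSpan ℝ (A + B) = vectorSpan ℝ A ⊔ vectorSpan ℝ B := by
  apply le_antisymm
  · rw [vectorSpan_def, Submodule.span_le]
    rintro v ⟨x, hx, y, hy, rfl⟩
    obtain ⟨a, ha, b, hb, rfl⟩ := hx
    obtain ⟨a', ha', b', hb', rfl⟩ := hy
    show a + b -ᵥ (a' + b') ∈ _
    have : a + b -ᵥ (a' + b') = (a -ᵥ a') + (b -ᵥ b') := by
      simp only [vsub_eq_sub]; ring
    rw [this]
    exact Submodule.add_mem _
      (Submodule.mem_sup_left (vsub_mem_vectorSpan ℝ ha ha'))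
      (Submodule.mem_sup_right (vsub_mem_vectorSpan ℝ hb hb'))
  · obtain ⟨b0, hb0⟩ := hB
    obtain ⟨a0, ha0⟩ := hA
    apply sup_le
    · rw [vectorSpan_def, Submodule.span_le]
      rintro v ⟨a, ha, a', ha', rfl⟩
      show a -ᵥ a' ∈ _
      have : a -ᵥ a' = (a + b0) -ᵥ (a' + b0) := by simp [vsub_eq_sub]
      rw [this]
      exact vsub_mem_vectorSpan ℝ (Set.add_mem_add ha hb0) (Set.add_mem_add ha' hb0)
    · rw [vectorSpan_def, Submodule.span_le]
      rintro v ⟨b, hb, b', hb', rfl⟩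
      show b -ᵥ b' ∈ _
      have : b -ᵥ b' = (a0 + b) -ᵥ (a0 + b') := by simp [vsub_eq_sub]
      rw [this]
      exact vsub_mem_vectorSpan ℝ (Set.add_mem_add ha0 hb) (Set.add_mem_add ha0 hb')

lemma sum_sets_nonempty {α : Type*} (𝓕 : Finset α) (S : α → Set (Fin r → ℝ))
    (hS : ∀ F ∈ 𝓕, (S F).Nonempty) : (∑ F ∈ 𝓕, S F).Nonempty := by
  classical
  induction 𝓕 using Finset.induction_on with
  | empty => exact ⟨0, by simp⟩
  | insert a s hni ih =>
      rw [Finset.sum_insert hni]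
      exact Set.Nonempty.add (hS a (Finset.mem_insert_self _ _))
        (ih fun F hF => hS F (Finset.mem_insert_of_mem hF))

lemma vectorSpan_sum_sets {α : Type*} (𝓕 : Finset α) (S : α → Set (Fin r → ℝ))
    (h𝓕 : 𝓕.Nonempty) (hS : ∀ F ∈ 𝓕, (S F).Nonempty) :
    vectorSpan ℝ (∑ F ∈ 𝓕, S F) = 𝓕.sup (fun F => vectorSpan ℝ (S F)) := by
  classical
  induction 𝓕 using Finset.induction_on with
  | empty => exact absurd h𝓕 (by simp)
  | insert a s hni ih =>
      rw [Finset.sum_insert hni, Finset.sup_insert]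
      rcases s.eq_empty_or_nonempty with rfl | hs
      · simp
      · rw [vectorSpan_add_eq (hS a (Finset.mem_insert_self _ _))
          (sum_sets_nonempty s S fun F hF => hS F (Finset.mem_insert_of_mem hF)),
          ih hs (fun F hF => hS F (Finset.mem_insert_of_mem hF))]

end Aux

section Aux2
variable {r : ℕ}

open scoped Classical in
noncomputable def classSumMap (rel : Fin r → Fin r → Prop) :
    (Fin r → ℝ) →ₗ[ℝ] (Quot rel → ℝ) where
  toFun x := fun q => ∑ i ∈ Finset.univ.filter (fun i => Quot.mk rel i = q), x i
  map_add' x y := funext fun q => Finset.sum_add_distrib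
  map_smul' c x := funext fun q => by simp [Finset.mul_sum]

open scoped Classical in
lemma classSumMap_apply (rel : Fin r → Fin r → Prop) (x : Fin r → ℝ) (q : Quot rel) :
    classSumMap rel x q = ∑ i ∈ Finset.univ.filter (fun i => Quot.mk rel i = q), x i := rfl

lemma classSumMap_surjective (rel : Fin r → Fin r → Prop) :
    Function.Surjective (classSumMap rel) := by
  classical
  intro y
  refine ⟨fun i => y (Quot.mk rel i) /
    (Finset.univ.filter (fun j => Quot.mk rel j = Quot.mk rel i)).card, ?_⟩
  funext q
  rw [classSumMap_apply]
  have hcard : (Finset.univ.filter (fun j : Fin r => Quot.mk rel j = q)).card ≠ 0 := by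
    obtain ⟨i, rfl⟩ := Quot.exists_rep q
    rw [Finset.card_ne_zero]
    exact ⟨i, by simp⟩
  calc ∑ i ∈ Finset.univ.filter (fun i => Quot.mk rel i = q),
        y (Quot.mk rel i) / (Finset.univ.filter (fun j => Quot.mk rel j = Quot.mk rel i)).card
      = ∑ _i ∈ Finset.univ.filter (fun i : Fin r => Quot.mk rel i = q),
        y q / (Finset.univ.filter (fun j : Fin r => Quot.mk rel j = q)).card := by
        refine Finset.sum_congr rfl fun i hi => ?_
        rw [Finset.mem_filter] at hi
        rw [hi.2]
    _ = y q := by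
        rw [Finset.sum_const, nsmul_eq_mul]
        field_simp

open scoped Classical in
lemma mem_ker_classSumMap {rel : Fin r → Fin r → Prop} {x : Fin r → ℝ} :
    x ∈ LinearMap.ker (classSumMap rel) ↔
    ∀ q, ∑ i ∈ Finset.univ.filter (fun i => Quot.mk rel i = q), x i = 0 := by
  rw [LinearMap.mem_ker]
  constructor
  · intro hx q; rw [← classSumMap_apply, hx]; rfl
  · intro hx; funext q; rw [classSumMap_apply]; exact hx q

end Aux2

section Aux3
variable {r : ℕ} {rel : Fin r → Fin r → Prop}

/-- the generating set of differences -/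
def diffSet (rel : Fin r → Fin r → Prop) : Set (Fin r → ℝ) :=
  {v | ∃ i j, rel i j ∧ v = Pi.single i 1 - Pi.single j 1}

lemma single_sub_single_mem_span (hij : Relation.EqvGen rel i j) :
    (Pi.single i 1 - Pi.single j 1 : Fin r → ℝ) ∈ Submodule.span ℝ (diffSet rel) := by
  induction hij with
  | rel a b hab => exact Submodule.subset_span ⟨a, b, hab, rfl⟩
  | refl a => simp
  | symm a b _ ih => simpa using Submodule.neg_mem _ ih
  | trans a b c _ _ ih1 ih2 => simpa using Submodule.add_mem _ ih1 ih2

open scoped Classical in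
lemma span_diffSet_eq_ker :
    Submodule.span ℝ (diffSet rel) = LinearMap.ker (classSumMap rel) := by
  apply le_antisymm
  · rw [Submodule.span_le]
    rintro v ⟨i, j, hij, rfl⟩
    rw [SetLike.mem_coe, mem_ker_classSumMap]
    intro q
    have hq : Quot.mk rel i = Quot.mk rel j := Quot.sound hij
    simp only [Pi.sub_apply, Finset.sum_sub_distrib, Pi.single_apply]
    rw [Finset.sum_ite_eq' _ i (fun _ => (1:ℝ)), Finset.sum_ite_eq' _ j (fun _ => (1:ℝ))]
    simp [hq]
  · intro x hx
    letI : Fintype (Quot rel) := Fintype.ofSurjective (Quot.mk rel) ((fun q => Quot.exists_rep q))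
    rw [mem_ker_classSumMap] at hx
    have hxrepr : x = ∑ i : Fin r, x i •
        ((Pi.single i 1 : Fin r → ℝ) - Pi.single (Quot.out (Quot.mk rel i)) 1) := by
      have h2 : ∑ i : Fin r, x i • (Pi.single (Quot.out (Quot.mk rel i)) 1 : Fin r → ℝ) = 0 := by
        rw [← Finset.sum_fiberwise Finset.univ (fun i => Quot.mk rel i)
          (fun i => x i • (Pi.single (Quot.out (Quot.mk rel i)) 1 : Fin r → ℝ))]
        refine Finset.sum_eq_zero fun q _ => ?_
        calc ∑ i ∈ Finset.univ.filter (fun i => Quot.mk rel i = q),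
              x i • (Pi.single (Quot.out (Quot.mk rel i)) 1 : Fin r → ℝ)
            = ∑ i ∈ Finset.univ.filter (fun i => Quot.mk rel i = q),
              x i • (Pi.single (Quot.out q) 1 : Fin r → ℝ) := by
              refine Finset.sum_congr rfl fun i hi => ?_
              rw [(Finset.mem_filter.mp hi).2]
          _ = (∑ i ∈ Finset.univ.filter (fun i => Quot.mk rel i = q), x i) •
              (Pi.single (Quot.out q) 1 : Fin r → ℝ) := (Finset.sum_smul).symm
          _ = 0 := by rw [hx q, zero_smul]
      have h1 : x = ∑ i : Fin r, x i • (Pi.single i 1 : Fin r → ℝ) := by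
        funext j
        simp [Pi.single_apply, Finset.sum_ite_eq]
      rw [Finset.sum_congr rfl (fun i _ => smul_sub (x i) _ _), Finset.sum_sub_distrib, h2,
        sub_zero, ← h1]
    rw [hxrepr]
    exact Submodule.sum_mem _ fun i _ => Submodule.smul_mem _ _
      (single_sub_single_mem_span (Quot.eqvGen_exact (Quot.out_eq (Quot.mk rel i)).symm))

end Aux3

section Aux4
variable {r : ℕ}

lemma finrank_ker_classSumMap (rel : Fin r → Fin r → Prop) :
    Module.finrank ℝ (LinearMap.ker (classSumMap rel)) = r - Nat.card (Quot rel) := by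
  classical
  letI : Fintype (Quot rel) := Fintype.ofSurjective (Quot.mk rel) (fun q => Quot.exists_rep q)
  have hrn := LinearMap.finrank_range_add_finrank_ker (classSumMap rel)
  have hrange : LinearMap.range (classSumMap rel) = ⊤ :=
    LinearMap.range_eq_top.mpr (classSumMap_surjective rel)
  rw [hrange, finrank_top, Module.finrank_pi, Module.finrank_pi, Fintype.card_fin] at hrn
  rw [Nat.card_eq_fintype_card]
  omega

lemma vectorSpan_convexHull (s : Set (Fin r → ℝ)) :
    vectorSpan ℝ (convexHull ℝ s) = vectorSpan ℝ s := by
  rw [← direction_affineSpan, affineSpan_convexHull, direction_affineSpan]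

end Aux4

theorem statement8' {r : ℕ} (𝓕 : Finset (Finset (Fin r))) (h𝓕 : 𝓕.Nonempty)
    (h : ∀ F ∈ 𝓕, F ≠ ∅) :
    Module.finrank ℝ (affineSpan ℝ (∑ F ∈ 𝓕, convexHull ℝ
      ((fun i => (Pi.single i 1 : Fin r → ℝ)) '' ↑F))).direction =
      r - Nat.card (Quot (fun i j : Fin r => ∃ F ∈ 𝓕, i ∈ F ∧ j ∈ F)) := by
  classical
  set rel : Fin r → Fin r → Prop := fun i j => ∃ F ∈ 𝓕, i ∈ F ∧ j ∈ F with hrel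
  rw [direction_affineSpan]
  have hne : ∀ F ∈ 𝓕, (convexHull ℝ
      ((fun i => (Pi.single i 1 : Fin r → ℝ)) '' ↑F)).Nonempty := by
    intro F hF
    rw [convexHull_nonempty_iff]
    exact Set.Nonempty.image _ (by simpa using Finset.nonempty_iff_ne_empty.mpr (h F hF))
  rw [vectorSpan_sum_sets 𝓕 _ h𝓕 hne]
  have key : 𝓕.sup (fun F => vectorSpan ℝ (convexHull ℝ
      ((fun i => (Pi.single i 1 : Fin r → ℝ)) '' ↑F))) = Submodule.span ℝ (diffSet rel) := by
    apply le_antisymm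
    · refine Finset.sup_le fun F hF => ?_
      rw [vectorSpan_convexHull, vectorSpan_def, Submodule.span_le]
      rintro v ⟨a, ⟨i, hi, rfl⟩, b, ⟨j, hj, rfl⟩, rfl⟩
      show (Pi.single i 1 : Fin r → ℝ) -ᵥ Pi.single j 1 ∈ _
      rw [vsub_eq_sub]
      exact Submodule.subset_span ⟨i, j, ⟨F, hF, hi, hj⟩, rfl⟩
    · rw [Submodule.span_le]
      rintro v ⟨i, j, ⟨F, hF, hiF, hjF⟩, rfl⟩
      have : (Pi.single i 1 : Fin r → ℝ) - Pi.single j 1 ∈ vectorSpan ℝ (convexHull ℝ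
          ((fun i => (Pi.single i 1 : Fin r → ℝ)) '' ↑F)) := by
        rw [vectorSpan_convexHull]
        exact vsub_mem_vectorSpan ℝ ⟨i, by simpa using hiF, rfl⟩ ⟨j, by simpa using hjF, rfl⟩
      exact Finset.le_sup (s := 𝓕) (b := F) (f := fun G => vectorSpan ℝ (convexHull ℝ ((fun i => (Pi.single i 1 : Fin r → ℝ)) '' (G : Set (Fin r))))) hF this
  rw [key, span_diffSet_eq_ker, finrank_ker_classSumMap]

/-- The dimension of the Minkowski sum `Δ_𝓕` equals `r - c`, where `c`
is the number of classes of the equivalence relation generated by letting `i ∼ j`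
whenever `i` and `j` lie in a common member of `𝓕`. -/
theorem statement8 {r : ℕ} (𝓕 : Finset (Finset (Fin r))) (h𝓕 : 𝓕.Nonempty)
    (h : ∀ F ∈ 𝓕, F ≠ ∅) :
    Module.finrank ℝ (affineSpan ℝ (minkSum 𝓕)).direction =
      r - Nat.card (Quot (fun i j : Fin r => ∃ F ∈ 𝓕, i ∈ F ∧ j ∈ F)) := by
  exact statement8' 𝓕 h𝓕 h
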